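/- arXiv:1611.00561 — 3 statements merged into one kernel-verified Lean document; each statement's English description precedes it below -/
import Mathlib

section
/- For a nonzero real number a, the function g(x) = exp(a x) on [0,1), and a nonnegative integer k with binary expansion k = Σ_{i=1}^{w} κ_i 2^{i-1} where κ_w = 1 (with w = 0 if k = 0), the k-th dyadic Walsh coefficient satisfies: ∫_0^1 exp(a x)·wal_k(x) dx = ((exp(a·2^{-w}) − 1)/a) · ∏_{i=1}^{w} (1 + (−1)^{κ_i} exp(a·2^{-i})). -/
open MeasureTheory

/-- The `i`-th binary digit (for `i ≥ 1`) of `x ∈ [0,1)` in the expansion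
`x = Σ_{i ≥ 1} x_i 2^{-i}` with infinitely many digits equal to `0`. -/
noncomputable def binDigit (x : ℝ) (i : ℕ) : ℕ := (⌊x * 2 ^ i⌋).toNat % 2

/-- The `k`-th dyadic Walsh function on `[0,1)`:
`wal_k(x) = (-1)^{Σ_{i ≥ 1} κ_i x_i}` where `k = Σ κ_i 2^{i-1}`. -/
noncomputable def walsh (k : ℕ) (x : ℝ) : ℝ :=
  ∏ i ∈ Finset.range k.size, if k.testBit i then (-1 : ℝ) ^ binDigit x (i + 1) else 1

/-- The `k`-th dyadic Walsh coefficient of `f : [0,1) → ℝ`. -/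
noncomputable def walshCoeff (f : ℝ → ℝ) (k : ℕ) : ℝ :=
  ∫ x in (0:ℝ)..1, f x * walsh k x

/-- `μ_u(k) = Σ_{i ≥ 1} (i + 1 - log₂ u) κ_i`, for the binary digits `κ_i` of `k`. -/
noncomputable def muWeight (u : ℝ) (k : ℕ) : ℝ :=
  ∑ i ∈ Finset.range k.size, if k.testBit i then ((i : ℝ) + 2 - Real.logb 2 u) else 0

/-- `A_u = (1 - exp (-u)) / u`. -/
noncomputable def Aconst (u : ℝ) : ℝ := (1 - Real.exp (-u)) / u

/-- `B_u = inf_{w ≥ 1} ((1-exp(-2^{-w}u))/(2^{-w}u)) ∏_{i=1}^w (1-exp(-2^{-i}u))/(2^{-i}u)`. -/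
noncomputable def Bconst (u : ℝ) : ℝ :=
  ⨅ w : {w : ℕ // 1 ≤ w},
    ((1 - Real.exp (-((2:ℝ) ^ (-((w:ℕ):ℤ)) * u))) / ((2:ℝ) ^ (-((w:ℕ):ℤ)) * u))
      * ∏ i ∈ Finset.Icc 1 (w : ℕ),
          (1 - Real.exp (-((2:ℝ) ^ (-(i:ℤ)) * u))) / ((2:ℝ) ^ (-(i:ℤ)) * u)


private lemma aux_sum_prod (w : ℕ) (c : ℕ → ℝ) :
    ∑ j ∈ Finset.range (2^w), ∏ m ∈ Finset.range w, (if j.testBit m then c m else 1)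
      = ∏ m ∈ Finset.range w, (1 + c m) := by
  induction w with
  | zero => simp
  | succ w ih =>
    have h2 : 2^(w+1) = 2^w + 2^w := by ring
    rw [h2, Finset.range_add, Finset.sum_union, Finset.sum_map]
    · have e1 : ∀ j ∈ Finset.range (2^w),
          ∏ m ∈ Finset.range (w+1), (if j.testBit m then c m else 1)
            = ∏ m ∈ Finset.range w, (if j.testBit m then c m else 1) := by
        intro j hj
        rw [Finset.prod_range_succ, Nat.testBit_eq_false_of_lt (Finset.mem_range.1 hj)]
        simp
      have e2 : ∀ j ∈ Finset.range (2^w),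
          ∏ m ∈ Finset.range (w+1),
              (if (addLeftEmbedding (2^w) j).testBit m then c m else 1)
            = (∏ m ∈ Finset.range w, (if j.testBit m then c m else 1)) * c w := by
        intro j hj
        have hj' := Finset.mem_range.1 hj
        have hemb : addLeftEmbedding (2^w) j = 2^w + j := rfl
        rw [hemb, Finset.prod_range_succ, Nat.testBit_two_pow_add_eq,
          Nat.testBit_eq_false_of_lt hj']
        simp only [Bool.not_false, if_true]
        congr 1
        refine Finset.prod_congr rfl fun m hm => ?_
        rw [Nat.testBit_two_pow_add_gt (Finset.mem_range.1 hm) j]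
      rw [Finset.sum_congr rfl e1, Finset.sum_congr rfl e2, ← Finset.sum_mul, ih,
        Finset.prod_range_succ]
      ring
    · simp only [Finset.disjoint_left, Finset.mem_range, Finset.mem_map]
      rintro x hx ⟨y, hy, rfl⟩
      simp only [addLeftEmbedding_apply] at hx
      omega


private lemma aux_cast_eq_sum (w : ℕ) : ∀ j : ℕ, j < 2^w →
    (j:ℝ) = ∑ m ∈ Finset.range w, (if j.testBit m then (2:ℝ)^m else 0) := by
  induction w with
  | zero => intro j hj; interval_cases j; simp
  | succ w ih =>
    intro j hj
    rcases lt_or_ge j (2^w) with h | h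
    · rw [Finset.sum_range_succ, Nat.testBit_eq_false_of_lt h]
      simpa using ih j h
    · obtain ⟨j', rfl⟩ : ∃ j', j = 2^w + j' := ⟨j - 2^w, by omega⟩
      have hj' : j' < 2^w := by
        have : 2^(w+1) = 2^w + 2^w := by ring
        omega
      rw [Finset.sum_range_succ, Nat.testBit_two_pow_add_eq,
        Nat.testBit_eq_false_of_lt hj']
      simp only [Bool.not_false, if_true]
      have e : ∀ m ∈ Finset.range w,
          (if (2^w + j').testBit m then (2:ℝ)^m else 0)
            = (if j'.testBit m then (2:ℝ)^m else 0) := by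
        intro m hm
        rw [Nat.testBit_two_pow_add_gt (Finset.mem_range.1 hm)]
      rw [Finset.sum_congr rfl e, ← ih _ hj']
      push_cast
      ring


private lemma aux_int_exp (a : ℝ) (ha : a ≠ 0) (c d : ℝ) :
    ∫ x in c..d, Real.exp (a * x) = (Real.exp (a * d) - Real.exp (a * c)) / a := by
  rw [intervalIntegral.integral_comp_mul_left Real.exp ha, integral_exp, smul_eq_mul,
    ← div_eq_inv_mul]

private lemma aux_binDigit (w j i : ℕ) (hi : i < w) (x : ℝ)
    (hx1 : (j:ℝ)/2^w ≤ x) (hx2 : x < ((j:ℝ)+1)/2^w) :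
    binDigit x (i+1) = if j.testBit (w-1-i) then 1 else 0 := by
  set n := w - 1 - i with hn
  have hw' : w = (i+1) + n := by omega
  have h2n : (0:ℝ) < 2^n := by positivity
  have h2i : (0:ℝ) < 2^(i+1) := by positivity
  have hsplit : (2:ℝ)^w = 2^(i+1) * 2^n := by rw [hw', pow_add]
  have hfloor : ⌊x * 2^(i+1)⌋ = ((j / 2^n : ℕ) : ℤ) := by
    rw [Int.floor_eq_iff]
    constructor
    · calc ((j / 2^n : ℕ):ℝ) ≤ (j:ℝ)/2^n := by
            have := Nat.cast_div_le (α := ℝ) (m := j) (n := 2^n)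
            push_cast at this; exact this
        _ = (j:ℝ)/2^w * 2^(i+1) := by rw [hsplit]; field_simp
        _ ≤ x * 2^(i+1) := by gcongr
    · have hnat : j + 1 ≤ (j / 2^n + 1) * 2^n := by
        have h1 : 0 < 2^n := Nat.pow_pos (by norm_num)
        have := (Nat.div_lt_iff_lt_mul h1).1 (show j / 2^n < j / 2^n + 1 by omega)
        omega
      have hreal : ((j:ℝ)+1) ≤ (((j / 2^n : ℕ):ℝ) + 1) * 2^n := by
        exact_mod_cast hnat
      calc x * 2^(i+1) < ((j:ℝ)+1)/2^w * 2^(i+1) := by gcongr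
        _ = ((j:ℝ)+1)/2^n := by rw [hsplit]; field_simp
        _ ≤ ((j / 2^n : ℕ):ℝ) + 1 := by rw [div_le_iff₀ h2n]; linarith [hreal]
  rw [binDigit, hfloor]
  simp only [Int.toNat_natCast, Nat.testBit_eq_decide_div_mod_eq]
  rcases Nat.mod_two_eq_zero_or_one (j / 2^n) with h | h <;> simp [h]

/-- For a nonzero real `a`, `g(x) = exp (a x)`, and `k ∈ ℕ` with binary expansion
`k = Σ_{i=1}^w κ_i 2^{i-1}`, `κ_w = 1` (and `w = 0` when `k = 0`), the `k`-th dyadic Walsh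
coefficient of `g` equals
`((exp (a 2^{-w}) - 1) / a) ∏_{i=1}^w (1 + (-1)^{κ_i} exp (a 2^{-i}))`. -/
theorem walshCoeff_exp (a : ℝ) (ha : a ≠ 0) (k : ℕ) (w : ℕ) (hw : w = k.size) :
    walshCoeff (fun x => Real.exp (a * x)) k
      = ((Real.exp (a * (2:ℝ) ^ (-(w:ℤ))) - 1) / a)
        * ∏ i ∈ Finset.Icc 1 w,
            (1 + (-1 : ℝ) ^ (if k.testBit (i - 1) then 1 else 0)
              * Real.exp (a * (2:ℝ) ^ (-(i:ℤ)))) := by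
  have hsz : k.size = w := hw.symm
  have h2w : (0:ℝ) < 2^w := by positivity
  set ψ : ℕ → ℝ := fun j => (j:ℝ) / 2^w with hψ
  have hψs : ∀ j : ℕ, ψ (j+1) = ((j:ℝ)+1) / 2^w := by
    intro j; simp only [hψ]; push_cast; ring
  have hle : ∀ j : ℕ, ψ j ≤ ψ (j+1) := by
    intro j; rw [hψs]; simp only [hψ]; gcongr; linarith
  set c : ℕ → ℝ := fun j => ∏ i ∈ Finset.range w,
      (if j.testBit (w-1-i) then (if k.testBit i then (-1:ℝ) else 1) else 1) with hc
  have hwal : ∀ (j : ℕ) (x : ℝ), x ∈ Set.Ico (ψ j) (ψ (j+1)) → walsh k x = c j := by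
    intro j x hx
    rw [walsh, hsz, hc]
    refine Finset.prod_congr rfl fun i hi => ?_
    have hi' := Finset.mem_range.1 hi
    have hx1 : (j:ℝ)/2^w ≤ x := hx.1
    have hx2 : x < ((j:ℝ)+1)/2^w := by have := hx.2; rwa [hψs] at this
    rw [aux_binDigit w j i hi' x hx1 hx2]
    cases hk : k.testBit i <;> cases hjb : j.testBit (w-1-i) <;> simp [hk, hjb]
  set f : ℝ → ℝ := fun x => Real.exp (a*x) * walsh k x with hf
  have hae : ∀ j : ℕ, ∀ᵐ x ∂(volume : Measure ℝ),
      x ∈ Set.uIoc (ψ j) (ψ (j+1)) → f x = Real.exp (a*x) * c j := by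
    intro j
    have h1 : ∀ᵐ (x : ℝ) ∂(volume : Measure ℝ), x ≠ ψ (j+1) := by
      rw [ae_iff]
      simpa using measure_singleton (ψ (j+1))
    filter_upwards [h1] with x hx hmem
    rw [Set.uIoc_of_le (hle j)] at hmem
    have hmem' : x ∈ Set.Ico (ψ j) (ψ (j+1)) := ⟨hmem.1.le, lt_of_le_of_ne hmem.2 hx⟩
    simp only [hf]
    rw [hwal j x hmem']
  have hae' : ∀ j : ℕ, f =ᵐ[volume.restrict (Set.uIoc (ψ j) (ψ (j+1)))]
      fun x => Real.exp (a*x) * c j := by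
    intro j
    exact (ae_restrict_iff' measurableSet_uIoc).2 (hae j)
  have hint : ∀ j : ℕ, IntervalIntegrable f volume (ψ j) (ψ (j+1)) := by
    intro j
    rw [intervalIntegrable_iff]
    have hg : IntegrableOn (fun x => Real.exp (a*x) * c j)
        (Set.uIoc (ψ j) (ψ (j+1))) volume := by
      rw [Set.uIoc_of_le (hle j)]
      exact Continuous.integrableOn_Ioc (by continuity)
    exact hg.congr (hae' j).symm
  have hval : ∀ j : ℕ, (∫ x in ψ j..ψ (j+1), f x)
      = c j * ((Real.exp (a * ψ (j+1)) - Real.exp (a * ψ j)) / a) := by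
    intro j
    rw [intervalIntegral.integral_congr_ae (hae j),
      intervalIntegral.integral_mul_const, aux_int_exp a ha]
    ring
  have h0 : ψ 0 = 0 := by simp [hψ]
  have h1 : ψ (2^w) = 1 := by
    simp only [hψ]; push_cast; field_simp
  have hsplit : walshCoeff (fun x => Real.exp (a * x)) k
      = ∑ j ∈ Finset.range (2^w), ∫ x in ψ j..ψ (j+1), f x := by
    have hs := intervalIntegral.sum_integral_adjacent_intervals
      (μ := volume) (a := ψ) (n := 2^w) (fun j _ => hint j)
    rw [h0, h1] at hs
    exact hs.symm
  rw [hsplit, Finset.sum_congr rfl (fun j _ => hval j)]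
  have hexp : ∀ j : ℕ, Real.exp (a * ψ (j+1))
      = Real.exp (a * (2:ℝ)^(-(w:ℤ))) * Real.exp (a * ψ j) := by
    intro j
    rw [← Real.exp_add]
    congr 1
    rw [hψs]
    simp only [hψ]
    have hz : (2:ℝ)^(-(w:ℤ)) = ((2:ℝ)^w)⁻¹ := by
      rw [zpow_neg, zpow_natCast]
    rw [hz]
    field_simp
    ring
  have hstep : ∀ j ∈ Finset.range (2^w),
      c j * ((Real.exp (a * ψ (j+1)) - Real.exp (a * ψ j)) / a)
        = ((Real.exp (a * (2:ℝ)^(-(w:ℤ))) - 1)/a) * (c j * Real.exp (a * ψ j)) := by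
    intro j _
    rw [hexp j]
    ring
  rw [Finset.sum_congr rfl hstep, ← Finset.mul_sum]
  congr 1
  set d : ℕ → ℝ := fun m =>
    (if k.testBit (w-1-m) then (-1:ℝ) else 1) * Real.exp (a * (2:ℝ)^((m:ℤ) - (w:ℤ))) with hd
  have hterm : ∀ j ∈ Finset.range (2^w),
      c j * Real.exp (a * ψ j) = ∏ m ∈ Finset.range w, (if j.testBit m then d m else 1) := by
    intro j hj
    have hj' := Finset.mem_range.1 hj
    have he : Real.exp (a * ψ j)
        = ∏ m ∈ Finset.range w,
            (if j.testBit m then Real.exp (a * (2:ℝ)^((m:ℤ)-(w:ℤ))) else 1) := by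
      have hsum : a * ψ j
          = ∑ m ∈ Finset.range w, (if j.testBit m then a * (2:ℝ)^((m:ℤ)-(w:ℤ)) else 0) := by
        simp only [hψ]
        rw [aux_cast_eq_sum w j hj', Finset.sum_div, Finset.mul_sum]
        refine Finset.sum_congr rfl fun m hm => ?_
        by_cases hb : j.testBit m
        · rw [if_pos hb, if_pos hb, zpow_sub₀ (by norm_num : (2:ℝ) ≠ 0),
            zpow_natCast, zpow_natCast]
        · rw [if_neg hb, if_neg hb]
          simp
      rw [hsum, Real.exp_sum]
      refine Finset.prod_congr rfl fun m hm => ?_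
      split_ifs <;> simp
    have hcj : c j = ∏ m ∈ Finset.range w,
        (if j.testBit m then (if k.testBit (w-1-m) then (-1:ℝ) else 1) else 1) := by
      rw [hc]
      refine Finset.prod_nbij' (fun i => w-1-i) (fun i => w-1-i)
        (fun i hi => ?_) (fun i hi => ?_) (fun i hi => ?_) (fun i hi => ?_) (fun i hi => ?_)
      · have := Finset.mem_range.1 hi; exact Finset.mem_range.2 (by omega)
      · have := Finset.mem_range.1 hi; exact Finset.mem_range.2 (by omega)
      · have := Finset.mem_range.1 hi; omega
      · have := Finset.mem_range.1 hi; omega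
      · have hi' := Finset.mem_range.1 hi
        have h1 : w-1-(w-1-i) = i := by omega
        rw [h1]
    rw [hcj, he, ← Finset.prod_mul_distrib]
    refine Finset.prod_congr rfl fun m hm => ?_
    simp only [hd]
    cases hb : j.testBit m <;> simp
  rw [Finset.sum_congr rfl hterm, aux_sum_prod]
  refine Finset.prod_nbij' (fun m => w - m) (fun i => w - i)
    (fun m hm => ?_) (fun i hi => ?_) (fun m hm => ?_) (fun i hi => ?_) (fun m hm => ?_)
  · have := Finset.mem_range.1 hm; exact Finset.mem_Icc.2 (by omega)
  · have := Finset.mem_Icc.1 hi; exact Finset.mem_range.2 (by omega)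
  · have := Finset.mem_range.1 hm; omega
  · have := Finset.mem_Icc.1 hi; omega
  · have hm' := Finset.mem_range.1 hm
    simp only [hd]
    have h1 : w - m - 1 = w-1-m := by omega
    have h2 : -((w - m : ℕ) : ℤ) = (m:ℤ) - (w:ℤ) := by
      push_cast [Nat.cast_sub hm'.le]
      ring
    rw [h1, h2]
    cases hb : k.testBit (w-1-m) <;> simp
end

section
/- Let u > 0 and g_u(x) = exp(−u x). For every nonnegative integer k, the k-th Walsh coefficient ĝ_u(k) satisfies B_u · 2^{−μ_u(k)} ≤ ĝ_u(k) ≤ A_u · 2^{−μ_u(k)}, where A_u = (1 − exp(−u))/u and B_u = inf_{w≥1} ((1 − exp(−2^{-w}u))/(2^{-w}u)) · ∏_{i=1}^{w} (1 − exp(−2^{-i}u))/(2^{-i}u). Moreover, equality ĝ_u(0) = A_u · 2^{−μ_u(0)} holds at k = 0. -/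
set_option maxHeartbeats 1000000


open MeasureTheory

lemma measurable_binDigit (i : ℕ) : Measurable (fun x : ℝ => binDigit x i) := by
  have h1 : Measurable (fun x : ℝ => ⌊x * 2 ^ i⌋) := (measurable_id.mul_const _).floor
  exact (measurable_of_countable (fun n : ℤ => n.toNat % 2)).comp h1

lemma measurable_walsh (k : ℕ) : Measurable (walsh k) := by
  unfold walsh
  refine Finset.measurable_prod _ (fun i _ => ?_)
  by_cases h : k.testBit i
  · simp only [h, if_true]
    exact (measurable_of_countable (fun n : ℕ => (-1:ℝ)^n)).comp (measurable_binDigit (i+1))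
  · simp [h]

lemma abs_walsh_le (k : ℕ) (x : ℝ) : |walsh k x| ≤ 1 := by
  unfold walsh
  rw [Finset.abs_prod]
  refine Finset.prod_le_one (fun i _ => abs_nonneg _) (fun i _ => ?_)
  by_cases h : k.testBit i <;> simp [h, abs_pow]

lemma size_eq (k : ℕ) (h : k ≠ 0) : k.size = (k/2).size + 1 := by
  conv_lhs => rw [← Nat.bit_bodd_div2 k]
  rw [Nat.size_bit (by rwa [Nat.bit_bodd_div2])]
  simp [Nat.div2_val]

lemma testBit_div2 (k i : ℕ) : (k/2).testBit i = k.testBit (i+1) := by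
  simp [Nat.testBit_succ]

lemma neg_one_pow_mod_two (n : ℕ) : ((-1:ℝ))^(n % 2) = (-1)^n := by
  conv_rhs => rw [← Nat.div_add_mod n 2]
  rw [pow_add, pow_mul]
  simp

lemma binDigit_double (x : ℝ) (i : ℕ) : binDigit (2*x) i = binDigit x (i+1) := by
  unfold binDigit
  congr 2
  ring_nf

lemma binDigit_one_eq_zero {x : ℝ} (h0 : 0 ≤ x) (h1 : x < 1/2) : binDigit x 1 = 0 := by
  unfold binDigit
  have h : ⌊x * (2:ℝ)^1⌋ = 0 := Int.floor_eq_zero_iff.2 (by constructor <;> [positivity; nlinarith])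
  rw [pow_one] at h
  simp [h]

lemma binDigit_one_eq_one {x : ℝ} (h0 : 1/2 ≤ x) (h1 : x < 1) : binDigit x 1 = 1 := by
  unfold binDigit
  have h : ⌊x * (2:ℝ)^1⌋ = 1 := by
    rw [Int.floor_eq_iff]
    push_cast
    constructor <;> nlinarith
  rw [pow_one] at h
  simp [h]

lemma digit_shift {x : ℝ} (hx : 1/2 ≤ x) (i : ℕ) (hi : 1 ≤ i) :
    ((-1:ℝ)) ^ binDigit (2*x - 1) i = (-1) ^ binDigit x (i+1) := by
  have h2 : (2*x - 1) * 2^i = x * 2^(i+1) - ((2^i : ℤ) : ℝ) := by push_cast; ring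
  have hfl : ⌊(2*x - 1) * 2^i⌋ = ⌊x * 2^(i+1)⌋ - 2^i := by
    rw [h2, Int.floor_sub_intCast]
  set a := ⌊x * 2^(i+1)⌋ with ha_def
  have ha : (2^i : ℤ) ≤ a := by
    rw [ha_def]
    refine Int.le_floor.2 ?_
    push_cast
    have : (2:ℝ)^(i+1) = 2 * 2^i := by ring
    nlinarith [pow_pos (by norm_num : (0:ℝ) < 2) i]
  obtain ⟨c, hc⟩ : ∃ c : ℕ, ((c:ℤ)) = 2^i := ⟨2^i, by push_cast; ring⟩
  rw [← hc] at ha hfl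
  have hnat : (a - (c:ℤ)).toNat + c = a.toNat := by omega
  unfold binDigit
  rw [hfl, ← ha_def, neg_one_pow_mod_two, neg_one_pow_mod_two, ← hnat, pow_add]
  have hce : Even c := by
    have : Even ((c:ℤ)) := by rw [hc]; exact (Int.even_pow).2 ⟨even_two, by omega⟩
    exact (Int.even_coe_nat c).1 this
  rw [hce.neg_one_pow, mul_one]

lemma walsh_zero (x : ℝ) : walsh 0 x = 1 := by simp [walsh, Nat.size_zero]

lemma walsh_left {k : ℕ} (hk : k ≠ 0) {x : ℝ} (h0 : 0 ≤ x) (h1 : x < 1/2) :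
    walsh k x = walsh (k/2) (2*x) := by
  unfold walsh
  rw [size_eq k hk, Finset.prod_range_succ']
  have hbit0 : (if k.testBit 0 then (-1:ℝ) ^ binDigit x (0 + 1) else 1) = 1 := by
    rw [binDigit_one_eq_zero h0 h1]
    simp
  rw [hbit0, mul_one]
  refine Finset.prod_congr rfl (fun i _ => ?_)
  rw [testBit_div2, binDigit_double]

lemma walsh_right {k : ℕ} (hk : k ≠ 0) {x : ℝ} (h0 : 1/2 ≤ x) (h1 : x < 1) :
    walsh k x = (if k.testBit 0 then (-1:ℝ) else 1) * walsh (k/2) (2*x - 1) := by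
  unfold walsh
  rw [size_eq k hk, Finset.prod_range_succ']
  have hbit0 : (if k.testBit 0 then (-1:ℝ) ^ binDigit x (0 + 1) else 1)
      = (if k.testBit 0 then (-1:ℝ) else 1) := by
    rw [binDigit_one_eq_one h0 h1]
    simp
  rw [hbit0, mul_comm]
  congr 1
  refine Finset.prod_congr rfl (fun i _ => ?_)
  rw [testBit_div2]
  by_cases h : k.testBit (i+1) <;> simp [h, digit_shift h0 (i+1) (by omega)]

lemma intInt (u a b : ℝ) (k : ℕ) :
    IntervalIntegrable (fun x => Real.exp (-u*x) * walsh k x) volume a b := by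
  have h : (fun x => Real.exp (-u*x) * walsh k x)
      = fun x => walsh k x * Real.exp (-u*x) := by funext x; ring
  rw [h]
  have hc : Continuous (fun x : ℝ => Real.exp (-u*x)) :=
    Real.continuous_exp.comp (continuous_const.mul continuous_id)
  constructor <;>
    exact (hc.integrableOn_Ioc).bdd_mul
      ((measurable_walsh k).aestronglyMeasurable)
      (c := 1) (Filter.Eventually.of_forall (fun x => by simpa using abs_walsh_le k x))

lemma ae_ne (c : ℝ) : ∀ᵐ (x:ℝ) ∂volume, x ≠ c := by
  refine ae_iff.2 ?_
  simp only [not_not]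
  have : {x : ℝ | x = c} = {c} := by ext; simp
  rw [this]
  exact Real.volume_singleton

lemma walshCoeff_rec (u : ℝ) {k : ℕ} (hk : k ≠ 0) :
    walshCoeff (fun x => Real.exp (-u*x)) k
      = (1 + (if k.testBit 0 then (-1:ℝ) else 1) * Real.exp (-(u/2))) / 2
        * walshCoeff (fun x => Real.exp (-(u/2) * x)) (k/2) := by
  unfold walshCoeff
  rw [← intervalIntegral.integral_add_adjacent_intervals (intInt u 0 (1/2) k) (intInt u (1/2) 1 k)]
  set s : ℝ := if k.testBit 0 then (-1:ℝ) else 1 with hs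
  set F : ℝ → ℝ := fun y => Real.exp (-(u/2) * y) * walsh (k/2) y with hF
  have h1 : ∫ x in (0:ℝ)..(1/2), Real.exp (-u*x) * walsh k x
      = ∫ x in (0:ℝ)..(1/2), F (2*x) := by
    refine intervalIntegral.integral_congr_ae ?_
    filter_upwards [ae_ne (1/2 : ℝ)] with x hx hmem
    rw [Set.uIoc_of_le (by norm_num : (0:ℝ) ≤ 1/2)] at hmem
    have hx2 : x < 1/2 := lt_of_le_of_ne hmem.2 hx
    rw [hF]
    simp only
    rw [← walsh_left hk (le_of_lt hmem.1) hx2]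
    congr 2
    ring
  have h2 : ∫ x in (1/2:ℝ)..1, Real.exp (-u*x) * walsh k x
      = ∫ x in (1/2:ℝ)..1, (s * Real.exp (-(u/2))) * F (2*x - 1) := by
    refine intervalIntegral.integral_congr_ae ?_
    filter_upwards [ae_ne (1 : ℝ)] with x hx hmem
    rw [Set.uIoc_of_le (by norm_num : (1/2:ℝ) ≤ 1)] at hmem
    have hx2 : x < 1 := lt_of_le_of_ne hmem.2 hx
    rw [walsh_right hk (le_of_lt hmem.1) hx2, hF, ← hs]
    simp only
    have hexp : Real.exp (-(u/2)) * Real.exp (-(u/2) * (2*x - 1)) = Real.exp (-u*x) := by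
      rw [← Real.exp_add]; congr 1; ring
    calc Real.exp (-u*x) * (s * walsh (k/2) (2*x-1))
        = (Real.exp (-(u/2)) * Real.exp (-(u/2) * (2*x - 1))) * (s * walsh (k/2) (2*x-1)) := by
          rw [hexp]
      _ = s * Real.exp (-(u/2)) * (Real.exp (-(u/2) * (2*x - 1)) * walsh (k/2) (2*x-1)) := by
          ring
  rw [h1, h2]
  rw [intervalIntegral.integral_comp_mul_left F (by norm_num : (2:ℝ) ≠ 0)]
  rw [intervalIntegral.integral_const_mul]
  rw [intervalIntegral.integral_comp_mul_sub F (by norm_num : (2:ℝ) ≠ 0) 1]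
  norm_num
  ring

lemma walshCoeff_zero_eq (u : ℝ) (hu : u ≠ 0) :
    walshCoeff (fun x => Real.exp (-u*x)) 0 = (1 - Real.exp (-u)) / u := by
  unfold walshCoeff
  simp only [walsh_zero, mul_one]
  rw [intervalIntegral.integral_comp_mul_left Real.exp (neg_ne_zero.2 hu)]
  rw [integral_exp]
  field_simp
  rw [smul_eq_mul, mul_zero, neg_zero, Real.exp_zero, ← mul_assoc, mul_neg, mul_one_div_cancel hu]
  ring

lemma walshCoeff_formula (k : ℕ) : ∀ u : ℝ, u ≠ 0 →
    walshCoeff (fun x => Real.exp (-u*x)) k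
      = (1 - Real.exp (-(u / 2^k.size))) / u
        * ∏ i ∈ Finset.range k.size,
            (1 + (if k.testBit i then (-1:ℝ) else 1) * Real.exp (-(u / 2^(i+1)))) := by
  induction k using Nat.strong_induction_on with
  | _ k IH =>
    intro u hu
    by_cases hk : k = 0
    · subst hk
      rw [walshCoeff_zero_eq u hu]
      simp [Nat.size_zero]
    · rw [walshCoeff_rec u hk,
        IH (k/2) (Nat.div_lt_self (Nat.pos_of_ne_zero hk) one_lt_two) (u/2)
          (div_ne_zero hu two_ne_zero)]
      rw [size_eq k hk, Finset.prod_range_succ']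
      have hP : ∏ i ∈ Finset.range (k/2).size,
            (1 + (if (k/2).testBit i then (-1:ℝ) else 1) * Real.exp (-((u/2) / 2^(i+1))))
          = ∏ i ∈ Finset.range (k/2).size,
            (1 + (if k.testBit (i+1) then (-1:ℝ) else 1) * Real.exp (-(u / 2^(i+1+1)))) := by
        refine Finset.prod_congr rfl (fun i _ => ?_)
        rw [testBit_div2]
        have : (u/2) / 2^(i+1) = u / 2^(i+1+1) := by rw [pow_succ]; ring
        rw [this]
      rw [hP]
      have hE : (u/2) / 2^((k/2).size) = u / 2^((k/2).size + 1) := by rw [pow_succ]; ring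
      rw [hE]
      have h0 : -(u / 2^(0+1)) = -(u/2) := by norm_num
      rw [h0]
      field_simp

lemma key_ineq (v : ℝ) (hv : 0 ≤ v) : 1 - Real.exp (-v) ≤ v/2 * (1 + Real.exp (-v)) := by
  set f : ℝ → ℝ := fun w => w/2*(1+Real.exp (-w)) - (1 - Real.exp (-w)) with hf
  have hexp : ∀ x : ℝ, HasDerivAt (fun w : ℝ => Real.exp (-w)) (-Real.exp (-x)) x := by
    intro x
    simpa [Function.comp_def] using (Real.hasDerivAt_exp (-x)).comp x (hasDerivAt_neg x)
  have hd : ∀ x : ℝ, HasDerivAt f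
      (1/2*(1+Real.exp (-x)) + x/2*(-Real.exp (-x)) - Real.exp (-x)) x := by
    intro x
    have ha := ((hasDerivAt_id x).div_const 2).mul ((hexp x).const_add 1)
    have hb := (hexp x).const_sub 1
    exact (ha.sub hb).congr_deriv (by simp only [id_eq]; ring)
  have hmono : MonotoneOn f (Set.Ici 0) := by
    refine monotoneOn_of_deriv_nonneg (convex_Ici 0) ?_ ?_ ?_
    · exact (Continuous.continuousOn (by fun_prop))
    · intro x _
      exact (hd x).differentiableAt.differentiableWithinAt
    · intro x hx
      rw [(hd x).deriv]
      rw [interior_Ici] at hx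
      have hx0 : (0:ℝ) < x := hx
      have hmul : Real.exp (-x) * Real.exp x = 1 := by
        rw [← Real.exp_add]; simp
      nlinarith [Real.add_one_le_exp x, Real.exp_pos (-x), Real.exp_pos x]
  have h0 : f 0 ≤ f v := hmono Set.self_mem_Ici hv hv
  have : f 0 = 0 := by simp [hf]
  rw [this] at h0
  simp only [hf] at h0
  linarith

lemma telescope (u : ℝ) (m : ℕ) :
    1 - Real.exp (-u)
      = (1 - Real.exp (-(u/2^m))) * ∏ i ∈ Finset.range m, (1 + Real.exp (-(u/2^(i+1)))) := by
  induction m with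
  | zero => simp
  | succ n ih =>
    rw [ih, Finset.prod_range_succ]
    have h2 : u/2^n = u/2^(n+1) + u/2^(n+1) := by rw [pow_succ]; ring
    have h3 : 1 - Real.exp (-(u/2^n))
        = (1 - Real.exp (-(u/2^(n+1)))) * (1 + Real.exp (-(u/2^(n+1)))) := by
      rw [h2, neg_add, Real.exp_add]
      ring
    rw [h3]
    ring

lemma pow_neg_mu {u : ℝ} (hu : 0 < u) (k : ℕ) :
    (2:ℝ) ^ (-muWeight u k)
      = ∏ i ∈ Finset.range k.size, (if k.testBit i then u / 2^(i+2) else 1) := by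
  rw [Real.rpow_def_of_pos (by norm_num : (0:ℝ) < 2), muWeight, ← Finset.sum_neg_distrib,
    Finset.mul_sum, Real.exp_sum]
  refine Finset.prod_congr rfl (fun i _ => ?_)
  by_cases h : k.testBit i
  · simp only [h, if_true]
    rw [neg_sub, mul_sub, Real.exp_sub]
    have h1 : Real.exp (Real.log 2 * Real.logb 2 u) = u := by
      rw [Real.logb, mul_div_assoc']
      rw [mul_comm, mul_div_assoc, div_self (Real.log_ne_zero_of_pos_of_ne_one (by norm_num) (by norm_num))]
      rw [mul_one, Real.exp_log hu]
    have h2 : Real.exp (Real.log 2 * ((i:ℝ) + 2)) = 2^(i+2) := by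
      have : Real.log 2 * ((i:ℝ) + 2) = ((i+2 : ℕ):ℝ) * Real.log 2 := by push_cast; ring
      rw [this, Real.exp_nat_mul, Real.exp_log (by norm_num : (0:ℝ) < 2)]
    rw [h1, h2]
  · simp [h]

lemma exp_neg_le_one {v : ℝ} (hv : 0 ≤ v) : Real.exp (-v) ≤ 1 :=
  Real.exp_le_one_iff.2 (by linarith)

lemma upper_bound {u : ℝ} (hu : 0 < u) (k : ℕ) :
    walshCoeff (fun x => Real.exp (-u*x)) k ≤ Aconst u * (2:ℝ) ^ (-muWeight u k) := by
  rw [walshCoeff_formula k u hu.ne', pow_neg_mu hu k, Aconst]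
  have hE : (0:ℝ) ≤ (1 - Real.exp (-(u/2^k.size))) / u := by
    have h1 := exp_neg_le_one (v := u/2^k.size) (by positivity)
    have hu' := hu
    have : (0:ℝ) ≤ 1 - Real.exp (-(u/2^k.size)) := by linarith
    positivity
  have hR : (1 - Real.exp (-u)) / u
        * (∏ i ∈ Finset.range k.size, (if k.testBit i then u / 2^(i+2) else 1))
      = (1 - Real.exp (-(u/2^k.size))) / u
        * ∏ i ∈ Finset.range k.size,
            ((1 + Real.exp (-(u/2^(i+1)))) * (if k.testBit i then u / 2^(i+2) else 1)) := by
    rw [telescope u k.size, Finset.prod_mul_distrib]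
    ring
  rw [hR]
  refine mul_le_mul_of_nonneg_left ?_ hE
  refine Finset.prod_le_prod (fun i _ => ?_) (fun i _ => ?_)
  · have h1 := exp_neg_le_one (v := u/2^(i+1)) (by positivity)
    have h2 := Real.exp_pos (-(u/2^(i+1)))
    by_cases h : k.testBit i <;> simp [h] <;> positivity
  · by_cases h : k.testBit i
    · simp only [h, if_true]
      have hk := key_ineq (u/2^(i+1)) (by positivity)
      have hv2 : (u/2^(i+1))/2 = u/2^(i+2) := by rw [pow_succ]; ring
      rw [hv2] at hk
      nlinarith [Real.exp_pos (-(u/2^(i+1)))]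
    · simp [h]

noncomputable def phi (v : ℝ) : ℝ := (1 - Real.exp (-v)) / v

lemma phi_pos {v : ℝ} (hv : 0 < v) : 0 < phi v := by
  have h1 : Real.exp (-v) < 1 := by
    rw [Real.exp_lt_one_iff]
    linarith
  exact div_pos (by linarith) hv

lemma Bterm_eq (u : ℝ) (w : ℕ) :
    ((1 - Real.exp (-((2:ℝ) ^ (-((w:ℕ):ℤ)) * u))) / ((2:ℝ) ^ (-((w:ℕ):ℤ)) * u))
        * ∏ i ∈ Finset.Icc 1 (w : ℕ),
            (1 - Real.exp (-((2:ℝ) ^ (-(i:ℤ)) * u))) / ((2:ℝ) ^ (-(i:ℤ)) * u)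
      = phi (u/2^w) * ∏ i ∈ Finset.range w, phi (u/2^(i+1)) := by
  have h : ∀ j : ℕ, (2:ℝ)^(-(j:ℤ)) * u = u / 2^j := by
    intro j
    rw [zpow_neg, zpow_natCast, inv_mul_eq_div]
  have hIcc : ∏ i ∈ Finset.Icc 1 w,
        (1 - Real.exp (-((2:ℝ) ^ (-(i:ℤ)) * u))) / ((2:ℝ) ^ (-(i:ℤ)) * u)
      = ∏ i ∈ Finset.range w, phi (u/2^(i+1)) := by
    rw [← Finset.Ico_add_one_right_eq_Icc, Finset.prod_Ico_eq_prod_range]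
    refine Finset.prod_congr (by norm_num) (fun i _ => ?_)
    rw [h (1+i), phi, add_comm 1 i]
  rw [h w, hIcc, phi]

lemma Bconst_le {u : ℝ} (hu : 0 < u) (w : ℕ) (hw : 1 ≤ w) :
    Bconst u ≤ phi (u/2^w) * ∏ i ∈ Finset.range w, phi (u/2^(i+1)) := by
  have hbdd : BddBelow (Set.range (fun w : {w : ℕ // 1 ≤ w} =>
      ((1 - Real.exp (-((2:ℝ) ^ (-((w:ℕ):ℤ)) * u))) / ((2:ℝ) ^ (-((w:ℕ):ℤ)) * u))
        * ∏ i ∈ Finset.Icc 1 (w : ℕ),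
            (1 - Real.exp (-((2:ℝ) ^ (-(i:ℤ)) * u))) / ((2:ℝ) ^ (-(i:ℤ)) * u))) := by
    refine ⟨0, ?_⟩
    rintro y ⟨⟨v, hv⟩, rfl⟩
    have h0 := Bterm_eq u v
    simp only at h0 ⊢
    rw [h0]
    have h1 : (0:ℝ) < phi (u/2^v) := phi_pos (by positivity)
    have h2 : (0:ℝ) ≤ ∏ i ∈ Finset.range v, phi (u/2^(i+1)) :=
      Finset.prod_nonneg (fun i _ => (phi_pos (by positivity)).le)
    exact mul_nonneg h1.le h2
  have h := ciInf_le hbdd (⟨w, hw⟩ : {w : ℕ // 1 ≤ w})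
  rw [Bterm_eq u w] at h
  exact h

lemma lower_bound {u : ℝ} (hu : 0 < u) {k : ℕ} (hk : k ≠ 0) :
    Bconst u * (2:ℝ) ^ (-muWeight u k) ≤ walshCoeff (fun x => Real.exp (-u*x)) k := by
  set m := k.size with hm
  have hm1 : 1 ≤ m := Nat.size_pos.2 (Nat.pos_of_ne_zero hk)
  rw [walshCoeff_formula k u hu.ne', pow_neg_mu hu k, ← hm]
  have hcnn : ∀ i ∈ Finset.range m, (0:ℝ) ≤ (if k.testBit i then u / 2^(i+2) else 1) := by
    intro i _
    by_cases h : k.testBit i <;> simp [h] <;> positivity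
  have hprodc : (0:ℝ) ≤ ∏ i ∈ Finset.range m, (if k.testBit i then u / 2^(i+2) else 1) :=
    Finset.prod_nonneg hcnn
  have step1 : Bconst u * ∏ i ∈ Finset.range m, (if k.testBit i then u / 2^(i+2) else 1)
      ≤ (phi (u/2^m) * ∏ i ∈ Finset.range m, phi (u/2^(i+1)))
        * ∏ i ∈ Finset.range m, (if k.testBit i then u / 2^(i+2) else 1) :=
    mul_le_mul_of_nonneg_right (Bconst_le hu m hm1) hprodc
  refine le_trans step1 ?_
  have hE : (0:ℝ) ≤ (1 - Real.exp (-(u/2^m))) / u := by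
    have h1 := exp_neg_le_one (v := u/2^m) (by positivity)
    have : (0:ℝ) ≤ 1 - Real.exp (-(u/2^m)) := by linarith
    positivity
  have hphiE : phi (u/2^m) = (1 - Real.exp (-(u/2^m))) / u * 2^m := by
    rw [phi]
    field_simp
  have h2m : (2:ℝ)^m = ∏ _i ∈ Finset.range m, (2:ℝ) := by
    rw [Finset.prod_const, Finset.card_range]
  have hcomb : (phi (u/2^m) * ∏ i ∈ Finset.range m, phi (u/2^(i+1)))
        * ∏ i ∈ Finset.range m, (if k.testBit i then u / 2^(i+2) else 1)
      = (1 - Real.exp (-(u/2^m))) / u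
        * ∏ i ∈ Finset.range m,
            (2 * phi (u/2^(i+1)) * (if k.testBit i then u / 2^(i+2) else 1)) := by
    rw [hphiE, h2m]
    rw [Finset.prod_mul_distrib, Finset.prod_mul_distrib]
    ring
  rw [hcomb]
  refine mul_le_mul_of_nonneg_left ?_ hE
  refine Finset.prod_le_prod (fun i _ => ?_) (fun i _ => ?_)
  · have h1 : (0:ℝ) ≤ phi (u/2^(i+1)) := (phi_pos (by positivity)).le
    have h2 := hcnn i (by assumption)
    positivity
  · have hv : (0:ℝ) < u/2^(i+1) := by positivity
    have he1 := exp_neg_le_one (v := u/2^(i+1)) (by positivity)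
    have he0 := Real.exp_pos (-(u/2^(i+1)))
    by_cases h : k.testBit i
    · simp only [h, if_true]
      have heq : 2 * phi (u/2^(i+1)) * (u / 2^(i+2)) = 1 - Real.exp (-(u/2^(i+1))) := by
        rw [phi]
        have hpow : (2:ℝ)^(i+2) = 2*2^(i+1) := by rw [pow_succ]; ring
        rw [hpow]
        field_simp
      rw [heq]
      linarith
    · simp only [h, if_false, mul_one, Bool.false_eq_true]
      have hkey := key_ineq (u/2^(i+1)) hv.le
      have : phi (u/2^(i+1)) ≤ (1 + Real.exp (-(u/2^(i+1))))/2 := by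
        rw [phi, div_le_div_iff₀ hv two_pos]
        linarith
      linarith

lemma muWeight_zero (u : ℝ) : muWeight u 0 = 0 := by
  simp [muWeight, Nat.size_zero]

lemma Bconst_le_Aconst {u : ℝ} (hu : 0 < u) : Bconst u ≤ Aconst u := by
  have h := Bconst_le hu 1 le_rfl
  rw [Finset.prod_range_one] at h
  norm_num at h
  refine le_trans h ?_
  set e := Real.exp (-(u/2)) with he
  have hkey := key_ineq (u/2) (by positivity)
  have he1 : e ≤ 1 := exp_neg_le_one (by positivity)
  have he0 : 0 < e := Real.exp_pos _
  have hphi : phi (u/2) = 2*(1-e)/u := by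
    rw [phi, ← he]
    field_simp
  have hA : Aconst u = (1-e)*(1+e)/u := by
    rw [Aconst]
    have : Real.exp (-u) = e * e := by
      rw [he, ← Real.exp_add]
      congr 1
      ring
    rw [this]
    congr 1
    ring
  rw [hphi, hA]
  rw [div_mul_div_comm, div_le_div_iff₀ (by positivity) hu]
  nlinarith [mul_nonneg (mul_nonneg (by linarith : (0:ℝ) ≤ 1 - e) hu.le) hu.le,
    mul_nonneg (by linarith : (0:ℝ) ≤ 1 - e) hu.le]

/-- For `u > 0` and `g_u(x) = exp (-u x)`, every Walsh coefficient satisfies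
`B_u 2^{-μ_u(k)} ≤ ĝ_u(k) ≤ A_u 2^{-μ_u(k)}`, with equality
`ĝ_u(0) = A_u 2^{-μ_u(0)}` at `k = 0`. -/
theorem walshCoeff_exp_bounds (u : ℝ) (hu : 0 < u) :
    (∀ k : ℕ,
      Bconst u * (2:ℝ) ^ (-muWeight u k)
          ≤ walshCoeff (fun x => Real.exp (-u * x)) k
      ∧ walshCoeff (fun x => Real.exp (-u * x)) k
          ≤ Aconst u * (2:ℝ) ^ (-muWeight u k))
    ∧ walshCoeff (fun x => Real.exp (-u * x)) 0
        = Aconst u * (2:ℝ) ^ (-muWeight u 0) := by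
  have hzero : walshCoeff (fun x => Real.exp (-u * x)) 0
      = Aconst u * (2:ℝ) ^ (-muWeight u 0) := by
    rw [muWeight_zero, neg_zero, Real.rpow_zero, mul_one, Aconst]
    exact walshCoeff_zero_eq u hu.ne'
  refine ⟨fun k => ⟨?_, upper_bound hu k⟩, hzero⟩
  by_cases hk : k = 0
  · subst hk
    rw [hzero, muWeight_zero, neg_zero, Real.rpow_zero, mul_one, mul_one]
    exact Bconst_le_Aconst hu
  · exact lower_bound hu hk
end

section
/- Let P ⊂ [0,1)^s be a digital net with N = |P| points whose coordinates have finite binary expansion x_j = Σ_{i≥1} ζ_{i,j} 2^{-i}, and u_1,…,u_s > 0. Then W_u(P) = (1/N) Σ_{x∈P} ∏_{j=1}^s ∏_{i≥1} (1 + (−1)^{ζ_{i,j}} 2^{−(i+1−log₂ u_j)}) − 1. -/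
open MeasureTheory

/-- The unit cube `[0,1)^s`. -/
def unitCube (s : ℕ) : Set (Fin s → ℝ) := Set.univ.pi fun _ => Set.Ico (0:ℝ) 1

/-- The multivariate Walsh function `wal_k(x) = ∏_j wal_{k_j}(x_j)`. -/
noncomputable def mwalsh {s : ℕ} (k : Fin s → ℕ) (x : Fin s → ℝ) : ℝ :=
  ∏ j, walsh (k j) (x j)

/-- The `k`-th multivariate Walsh coefficient `f̂(k) = ∫_{[0,1)^s} f(x) wal_k(x) dx`. -/
noncomputable def mWalshCoeff {s : ℕ} (f : (Fin s → ℝ) → ℝ) (k : Fin s → ℕ) : ℝ :=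
  ∫ x in unitCube s, f x * mwalsh k x

/-- `μ_u(k) = Σ_{j=1}^s Σ_{i ≥ 1} (i + 1 - log₂ u_j) κ_{i,j}` for `k ∈ ℕ₀^s`. -/
noncomputable def muWeightS {s : ℕ} (u : Fin s → ℝ) (k : Fin s → ℕ) : ℝ :=
  ∑ j, muWeight (u j) (k j)

open scoped Classical

/-- A digital net over `𝔽₂` given by `s` generating matrices of size `n × m`. -/
structure DigitalNet (s n m : ℕ) where
  C : Fin s → Matrix (Fin n) (Fin m) (ZMod 2)

/-- The vector of the first `n` binary digits of a natural number. -/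
def bitVec (n : ℕ) (k : ℕ) : Fin n → ZMod 2 := fun i => if k.testBit i then 1 else 0

/-- The `h`-th point of a digital net: the `j`-th coordinate is
`x_j(h) = Σ_{i=1}^n y_{h,i,j} 2^{-i}` where `(y_{h,i,j})_i = C_j · h⃗`. -/
noncomputable def DigitalNet.point {s n m : ℕ} (D : DigitalNet s n m) (h : ℕ) :
    Fin s → ℝ :=
  fun j => ∑ i : Fin n,
    if (D.C j).mulVec (bitVec m h) i = 1 then (2:ℝ) ^ (-(i:ℤ) - 1) else 0

/-- The dual net `P^⊥ = {k ∈ ℕ₀^s : C_1ᵀ k⃗_1 + ⋯ + C_sᵀ k⃗_s = 0}`. -/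
def DigitalNet.dual {s n m : ℕ} (D : DigitalNet s n m) : Set (Fin s → ℕ) :=
  {k | ∑ j, (D.C j).transpose.mulVec (bitVec n (k j)) = 0}

/-- The QMC integration error of `f` by the digital net `D`:
`(1/2^m) Σ_{x ∈ P} f(x) - ∫_{[0,1)^s} f`. -/
noncomputable def qmcErr {s n m : ℕ} (f : (Fin s → ℝ) → ℝ) (D : DigitalNet s n m) : ℝ :=
  (∑ h ∈ Finset.range (2 ^ m), f (D.point h)) / (2 ^ m) - ∫ x in unitCube s, f x

/-- The generalized WAFOM `W_u(P) = Σ_{k ∈ P^⊥ \ {0}} 2^{-μ_u(k)}`. -/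
noncomputable def Wafom {s n m : ℕ} (u : Fin s → ℝ) (D : DigitalNet s n m) : ℝ :=
  ∑' k : Fin s → ℕ, if k ∈ D.dual ∧ k ≠ 0 then (2:ℝ) ^ (-muWeightS u k) else 0


section WafomAux
open Finset


/-- encode a finite set of bit positions as a natural number -/
def enc (t : Finset ℕ) : ℕ := ∑ i ∈ t, 2 ^ i

lemma enc_lt {N : ℕ} {t : Finset ℕ} (ht : t ⊆ Finset.range N) : enc t < 2 ^ N := by
  calc enc t ≤ ∑ i ∈ Finset.range N, 2 ^ i := Finset.sum_le_sum_of_subset ht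
  _ = 2 ^ N - 1 := by
      have := Nat.geomSum_eq (le_refl 2) N
      simp [this]
  _ < 2 ^ N := by have := Nat.one_le_two_pow (n := N); omega

lemma testBit_enc (t : Finset ℕ) (j : ℕ) : (enc t).testBit j = true ↔ j ∈ t := by
  classical
  obtain ⟨N, hN⟩ : ∃ N, t ⊆ Finset.range N := ⟨(t.sup id) + 1, fun x hx => by
    simp only [Finset.mem_range]; exact Nat.lt_succ_of_le (Finset.le_sup (f := id) hx)⟩
  induction N generalizing t j with
  | zero =>
    simp only [Finset.range_zero, Finset.subset_empty] at hN
    subst hN; simp [enc]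
  | succ N ih =>
    by_cases hmem : N ∈ t
    · have ht' : t.erase N ⊆ Finset.range N := by
        intro x hx
        have h1 := hN (Finset.mem_of_mem_erase hx)
        simp only [Finset.mem_range] at h1 ⊢
        have := Finset.ne_of_mem_erase hx
        omega
      have henc : enc t = 2 ^ N + enc (t.erase N) := by
        rw [enc, ← Finset.sum_erase_add t _ hmem, Nat.add_comm]; rfl
      have hlt : enc (t.erase N) < 2 ^ N := enc_lt ht'
      rcases lt_trichotomy j N with hj | hj | hj
      · rw [henc, Nat.testBit_two_pow_add_gt hj, ih _ _ ht']
        constructor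
        · exact fun h => Finset.mem_of_mem_erase h
        · exact fun h => Finset.mem_erase.mpr ⟨Nat.ne_of_lt hj, h⟩
      · subst hj
        rw [henc, Nat.testBit_two_pow_add_eq]
        have : (enc (t.erase j)).testBit j = false := by
          by_contra hc
          rw [Bool.not_eq_false, ih _ _ ht'] at hc
          exact absurd (ht' hc) (by simp)
        simp [this, hmem]
      · have h1 : enc t < 2 ^ (N + 1) := by
          have h2 : 2 ^ (N + 1) = 2 * 2 ^ N := by ring
          omega
        have h3 : (2:ℕ) ^ (N + 1) ≤ 2 ^ j := Nat.pow_le_pow_right (by norm_num) hj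
        rw [Nat.testBit_lt_two_pow (lt_of_lt_of_le h1 h3)]
        have : j ∉ t := fun h => by
          have := hN h; simp only [Finset.mem_range] at this; omega
        simp [this]
    · exact ih _ _ (fun x hx => by
        have h1 := hN hx; simp only [Finset.mem_range] at h1 ⊢
        rcases Nat.lt_succ_iff_lt_or_eq.mp h1 with h | h
        · exact h
        · exact absurd (h ▸ hx) hmem)

lemma enc_injective : Function.Injective enc := by
  intro t1 t2 h
  ext j
  rw [← testBit_enc, ← testBit_enc, h]

lemma lt_size_of_testBit {k i : ℕ} (h : k.testBit i = true) : i < k.size := by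
  by_contra hc
  push_neg at hc
  rw [Nat.testBit_lt_two_pow (Nat.size_le.mp hc)] at h
  exact absurd h (by simp)

/-- decode: every natural is enc of the set of its bits -/
lemma enc_dec (k : ℕ) :
    enc ((Finset.range k.size).filter (fun i => k.testBit i = true)) = k := by
  classical
  apply Nat.eq_of_testBit_eq
  intro i
  by_cases h : k.testBit i
  · rw [h, (testBit_enc _ _).mpr]
    simp [Finset.mem_filter, Finset.mem_range, lt_size_of_testBit h, h]
  · simp only [Bool.not_eq_true] at h
    rw [h]
    by_contra hc
    rw [Bool.not_eq_false, testBit_enc] at hc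
    simp only [Finset.mem_filter] at hc
    rw [hc.2] at h
    simp at h

noncomputable def Gb (b : ℕ → ℝ) (k : ℕ) : ℝ :=
  ∏ i ∈ Finset.range k.size, if k.testBit i then b i else 1

lemma Gb_eq_prod_range {b : ℕ → ℝ} {k N : ℕ} (hk : k.size ≤ N) :
    Gb b k = ∏ i ∈ Finset.range N, if k.testBit i then b i else 1 := by
  apply Finset.prod_subset
  · exact Finset.range_subset_range.mpr hk
  · intro i _ hi
    simp only [Finset.mem_range, not_lt] at hi
    have : k.testBit i = false := by
      by_contra hc
      rw [Bool.not_eq_false] at hc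
      exact absurd (lt_size_of_testBit hc) (by omega)
    simp [this]

lemma Gb_enc (b : ℕ → ℝ) (t : Finset ℕ) : Gb b (enc t) = ∏ i ∈ t, b i := by
  classical
  have hsub : t ⊆ Finset.range (enc t).size := fun i hi =>
    Finset.mem_range.mpr (lt_size_of_testBit ((testBit_enc t i).mpr hi))
  rw [Gb]
  rw [show (∏ i ∈ Finset.range (enc t).size, if (enc t).testBit i then b i else 1)
      = ∏ i ∈ Finset.range (enc t).size, if i ∈ t then b i else 1 from
    Finset.prod_congr rfl (fun i _ => by
      by_cases h : i ∈ t
      · simp [h, (testBit_enc t i).mpr h]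
      · have : (enc t).testBit i = false := by
          by_contra hc
          rw [Bool.not_eq_false, testBit_enc] at hc
          exact h hc
        simp [h, this])]
  rw [Finset.prod_ite_mem, Finset.inter_eq_right.mpr hsub]

lemma prod_one_add_eq (b : ℕ → ℝ) (S : Finset ℕ) :
    ∏ i ∈ S, (1 + b i) = ∑ k ∈ S.powerset.image enc, Gb b k := by
  classical
  rw [Finset.sum_image (fun t _ t' _ h => enc_injective h)]
  have : ∀ t ∈ S.powerset, Gb b (enc t) = (∏ i ∈ t, b i) * ∏ i ∈ S \ t, (1:ℝ) :=
    fun t _ => by rw [Gb_enc]; simp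
  rw [Finset.sum_congr rfl this, ← Finset.prod_add]
  exact Finset.prod_congr rfl (fun i _ => by ring)

lemma Gb_abs (b : ℕ → ℝ) (k : ℕ) : |Gb b k| = Gb (fun i => |b i|) k := by
  rw [Gb, Gb, Finset.abs_prod]
  exact Finset.prod_congr rfl (fun i _ => by by_cases h : k.testBit i <;> simp [h])

lemma Gb_nonneg {b : ℕ → ℝ} (hb : ∀ i, 0 ≤ b i) (k : ℕ) : 0 ≤ Gb b k :=
  Finset.prod_nonneg (fun i _ => by by_cases h : k.testBit i <;> simp [h, hb i])

lemma summable_Gb_abs {b : ℕ → ℝ} (hb : Summable fun i => |b i|) :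
    Summable (fun k => Gb (fun i => |b i|) k) := by
  classical
  apply summable_of_sum_range_le (c := Real.exp (∑' i, |b i|))
    (fun k => Gb_nonneg (fun i => abs_nonneg _) k)
  intro n
  have hsub : Finset.range n ⊆ (Finset.range n).powerset.image enc := by
    intro k hk
    simp only [Finset.mem_range] at hk
    simp only [Finset.mem_image, Finset.mem_powerset]
    refine ⟨(Finset.range k.size).filter (fun i => k.testBit i = true), ?_, enc_dec k⟩
    intro i hi
    simp only [Finset.mem_filter, Finset.mem_range] at hi ⊢
    have : k.size ≤ n := Nat.size_le.mpr (lt_of_lt_of_le hk (Nat.le_of_lt (Nat.lt_two_pow_self)))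
    omega
  calc ∑ k ∈ Finset.range n, Gb (fun i => |b i|) k
      ≤ ∑ k ∈ (Finset.range n).powerset.image enc, Gb (fun i => |b i|) k :=
        Finset.sum_le_sum_of_subset_of_nonneg hsub
          (fun k _ _ => Gb_nonneg (fun i => abs_nonneg _) k)
    _ = ∏ i ∈ Finset.range n, (1 + |b i|) := (prod_one_add_eq _ _).symm
    _ ≤ ∏ i ∈ Finset.range n, Real.exp |b i| :=
        Finset.prod_le_prod (fun i _ => by positivity)
          (fun i _ => by linarith [Real.add_one_le_exp |b i|])
    _ = Real.exp (∑ i ∈ Finset.range n, |b i|) := (Real.exp_sum _ _).symm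
    _ ≤ Real.exp (∑' i, |b i|) := Real.exp_le_exp.mpr (Summable.sum_le_tsum _ (fun i _ => abs_nonneg _) hb)

lemma summable_Gb {b : ℕ → ℝ} (hb : Summable fun i => |b i|) : Summable (Gb b) := by
  apply Summable.of_abs
  have := summable_Gb_abs hb
  simpa [← Gb_abs] using this

lemma hasProd_one_add {b : ℕ → ℝ} (hb : Summable fun i => |b i|) :
    HasProd (fun i => 1 + b i) (∑' k, Gb b k) := by
  classical
  have hS : HasSum (Gb b) (∑' k, Gb b k) := (summable_Gb hb).hasSum
  have hΦ : Filter.Tendsto (fun S : Finset ℕ => S.powerset.image enc)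
      Filter.atTop Filter.atTop := by
    apply Filter.tendsto_atTop_finset_of_monotone
    · intro S S' hSS
      exact Finset.image_subset_image (Finset.powerset_mono.mpr hSS)
    · intro k
      refine ⟨Finset.range k.size, ?_⟩
      simp only [Finset.mem_image, Finset.mem_powerset]
      exact ⟨(Finset.range k.size).filter (fun i => k.testBit i = true),
        Finset.filter_subset _ _, enc_dec k⟩
  have := hS.comp hΦ
  rw [HasProd]
  convert this using 1
  funext S
  exact prod_one_add_eq b S
  rfl

lemma tprod_one_add' {b : ℕ → ℝ} (hb : Summable fun i => |b i|) :
    ∏' i, (1 + b i) = ∑' k, Gb b k := (hasProd_one_add hb).tprod_eq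

lemma binDigit_finite (y : ℕ → ℕ) (hy : ∀ i, y i ≤ 1) (n t : ℕ) :
    binDigit (∑ i ∈ Finset.range n, (y i : ℝ) * (2:ℝ) ^ (-(i:ℤ) - 1)) (t + 1)
      = if t < n then y t else 0 := by
  set x := ∑ i ∈ Finset.range n, (y i : ℝ) * (2:ℝ) ^ (-(i:ℤ) - 1) with hx
  set P := min (t + 1) n with hP
  set NA : ℕ := ∑ i ∈ Finset.range P, y i * 2 ^ (t - i) with hNA
  -- step 1 : x * 2^(t+1) = NA + tail
  have hsplit : x * 2 ^ (t + 1)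
      = (NA : ℝ) + ∑ i ∈ Finset.Ico P n, (y i : ℝ) * (2:ℝ) ^ ((t:ℤ) - i) := by
    have hterm : ∀ i : ℕ, (y i : ℝ) * (2:ℝ) ^ (-(i:ℤ) - 1) * 2 ^ (t + 1)
        = (y i : ℝ) * (2:ℝ) ^ ((t:ℤ) - i) := by
      intro i
      have h2 : ((2:ℝ) ^ (t + 1) : ℝ) = (2:ℝ) ^ ((t + 1 : ℕ) : ℤ) := by
        rw [zpow_natCast]
      rw [mul_assoc, h2, ← zpow_add₀ (by norm_num : (2:ℝ) ≠ 0)]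
      congr 2
      push_cast
      ring
    rw [hx, Finset.sum_mul]
    rw [Finset.sum_congr rfl (fun i _ => hterm i)]
    have hPn : P ≤ n := min_le_right _ _
    rw [Finset.range_eq_Ico, ← Finset.sum_Ico_consecutive _ (Nat.zero_le P) hPn]
    congr 1
    rw [← Finset.range_eq_Ico, hNA]
    push_cast
    apply Finset.sum_congr rfl
    intro i hi
    simp only [Finset.mem_range] at hi
    have hit : i ≤ t := by omega
    congr 1
    rw [← zpow_natCast (2:ℝ) (t - i)]
    congr 1
    omega
  set f := ∑ i ∈ Finset.Ico P n, (y i : ℝ) * (2:ℝ) ^ ((t:ℤ) - i) with hf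
  have hf0 : 0 ≤ f := Finset.sum_nonneg (fun i _ => by positivity)
  have hf1 : f < 1 := by
    rcases le_or_gt n (t + 1) with hc | hc
    · have : P = n := by omega
      rw [hf, this]
      simp
    · have hPt : P = t + 1 := by omega
      have hb : f ≤ ∑ i ∈ Finset.Ico P n, (2:ℝ) ^ ((t:ℤ) - i) := by
        apply Finset.sum_le_sum
        intro i _
        have : (y i : ℝ) ≤ 1 := by exact_mod_cast hy i
        nlinarith [zpow_pos (show (0:ℝ) < 2 by norm_num) ((t:ℤ) - i)]
      have hgeom : ∑ i ∈ Finset.Ico P n, (2:ℝ) ^ ((t:ℤ) - i)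
          = ∑ j ∈ Finset.range (n - P), (2⁻¹:ℝ) * (2⁻¹) ^ j := by
        rw [Finset.sum_Ico_eq_sum_range]
        apply Finset.sum_congr rfl
        intro j _
        rw [hPt]
        rw [show (t:ℤ) - (t + 1 + j : ℕ) = -(j + 1 : ℕ) by push_cast; ring]
        rw [zpow_neg, zpow_natCast, pow_succ, mul_inv, inv_pow]
        ring
      have hsum : ∑ j ∈ Finset.range (n - P), (2⁻¹:ℝ) * (2⁻¹) ^ j
          = 1 - (2⁻¹:ℝ) ^ (n - P) := by
        rw [← Finset.mul_sum, geom_sum_eq (by norm_num)]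
        rw [inv_pow]
        field_simp
        ring
      have hpos : (0:ℝ) < (2⁻¹:ℝ) ^ (n - P) := by positivity
      calc f ≤ _ := hb
        _ = 1 - (2⁻¹:ℝ) ^ (n - P) := by rw [hgeom, hsum]
        _ < 1 := by linarith
  have hfloor : ⌊x * 2 ^ (t + 1)⌋ = (NA : ℤ) := by
    rw [hsplit, Int.floor_eq_iff]
    constructor
    · push_cast; linarith
    · push_cast; linarith
  rw [binDigit, hfloor, Int.toNat_natCast]
  -- now NA % 2
  rcases lt_or_ge t n with htn | htn
  · have hPt : P = t + 1 := by omega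
    have : NA = 2 * (∑ i ∈ Finset.range t, y i * 2 ^ (t - 1 - i)) + y t := by
      rw [hNA, hPt, Finset.sum_range_succ, Nat.sub_self, pow_zero, mul_one,
        Finset.mul_sum]
      congr 1
      apply Finset.sum_congr rfl
      intro i hi
      simp only [Finset.mem_range] at hi
      rw [show t - i = (t - 1 - i) + 1 by omega, pow_succ]
      ring
    have hyt := hy t
    simp only [htn, if_true]
    omega
  · have hPt : P = n := by omega
    have : NA = 2 * (∑ i ∈ Finset.range n, y i * 2 ^ (t - 1 - i)) := by
      rw [hNA, hPt, Finset.mul_sum]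
      apply Finset.sum_congr rfl
      intro i hi
      simp only [Finset.mem_range] at hi
      rw [show t - i = (t - 1 - i) + 1 by omega, pow_succ]
      ring
    simp only [show ¬ (t < n) by omega, if_false]
    omega

noncomputable def sgn (z : ZMod 2) : ℝ := if z = 1 then -1 else 1

lemma zmod2_cases (z : ZMod 2) : z = 0 ∨ z = 1 := by revert z; decide

lemma sgn_zero : sgn 0 = 1 := by
  simp [sgn, show ((0:ZMod 2) ≠ 1) from by decide]

lemma sgn_one : sgn 1 = -1 := by simp [sgn]

lemma sgn_add (a b : ZMod 2) : sgn (a + b) = sgn a * sgn b := by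
  rcases zmod2_cases a with ha | ha <;> rcases zmod2_cases b with hb | hb <;>
    subst ha <;> subst hb
  · rw [show ((0:ZMod 2) + 0) = 0 from by decide, sgn_zero]; ring
  · rw [show ((0:ZMod 2) + 1) = 1 from by decide, sgn_zero, sgn_one]; ring
  · rw [show ((1:ZMod 2) + 0) = 1 from by decide, sgn_zero, sgn_one]; ring
  · rw [show ((1:ZMod 2) + 1) = 0 from by decide, sgn_zero, sgn_one]; ring

lemma sgn_add_one (a : ZMod 2) : sgn (a + 1) = - sgn a := by
  rcases zmod2_cases a with ha | ha <;> subst ha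
  · rw [show ((0:ZMod 2) + 1) = 1 from by decide, sgn_zero, sgn_one]
  · rw [show ((1:ZMod 2) + 1) = 0 from by decide, sgn_zero, sgn_one]; ring

lemma sgn_sum {ι : Type*} (t : Finset ι) (v : ι → ZMod 2) :
    sgn (∑ i ∈ t, v i) = ∏ i ∈ t, sgn (v i) := by
  classical
  induction t using Finset.cons_induction with
  | empty => simp [sgn_zero]
  | cons a s ha ih => rw [Finset.sum_cons, Finset.prod_cons, sgn_add, ih]

lemma char_sum {m : ℕ} (V : Fin m → ZMod 2) :
    ∑ h ∈ Finset.range (2 ^ m), sgn (dotProduct V (bitVec m h))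
      = if V = 0 then ((2:ℝ) ^ m) else 0 := by
  classical
  rw [← Fin.sum_univ_eq_sum_range (fun h => sgn (dotProduct V (bitVec m h))) (2 ^ m)]
  have hbij : Function.Bijective (fun h : Fin (2 ^ m) => bitVec m h.val) := by
    rw [Fintype.bijective_iff_injective_and_card]
    constructor
    · intro h1 h2 heq
      apply Fin.ext
      apply Nat.eq_of_testBit_eq
      intro i
      rcases lt_or_ge i m with him | him
      · have := congrFun heq ⟨i, him⟩
        simp only [bitVec] at this
        by_cases hb1 : (h1 : ℕ).testBit i <;> by_cases hb2 : (h2 : ℕ).testBit i <;>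
          simp [hb1, hb2] at this ⊢
      · rw [Nat.testBit_lt_two_pow, Nat.testBit_lt_two_pow]
        · exact lt_of_lt_of_le h2.isLt (Nat.pow_le_pow_right (by norm_num) him)
        · exact lt_of_lt_of_le h1.isLt (Nat.pow_le_pow_right (by norm_num) him)
    · rw [Fintype.card_fun]
      simp
  rw [Fintype.sum_bijective _ hbij
    (fun h : Fin (2 ^ m) => sgn (dotProduct V (bitVec m h.val)))
    (fun w => sgn (dotProduct V w)) (fun h => rfl)]
  by_cases hV : V = 0
  · subst hV
    simp only [zero_dotProduct, sgn_zero, Finset.sum_const, Finset.card_univ]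
    rw [Fintype.card_fun]
    simp
  · simp only [hV, if_false]
    obtain ⟨i0, hi0⟩ : ∃ i0, V i0 = 1 := by
      by_contra hc
      push_neg at hc
      apply hV
      funext i
      rcases zmod2_cases (V i) with h | h
      · exact h
      · exact absurd h (hc i)
    apply Finset.sum_involution
      (g := fun w _ => Function.update w i0 (w i0 + 1))
    · intro w _
      have hdot : dotProduct V (Function.update w i0 (w i0 + 1))
          = dotProduct V w + 1 := by
        rw [dotProduct, dotProduct]
        have h1 : ∀ i : Fin m, V i * Function.update w i0 (w i0 + 1) i
            = Function.update (fun i => V i * w i) i0 (V i0 * (w i0 + 1)) i := by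
          intro i
          by_cases hii : i = i0
          · subst hii; simp
          · simp [Function.update_of_ne hii]
        rw [Finset.sum_congr rfl (fun i _ => h1 i),
          Finset.sum_update_of_mem (Finset.mem_univ i0)]
        rw [← Finset.add_sum_erase _ _ (Finset.mem_univ i0)]
        rw [hi0]
        have : Finset.univ \ {i0} = Finset.univ.erase i0 := by
          rw [Finset.sdiff_singleton_eq_erase]
        rw [this]
        ring
      rw [hdot, sgn_add_one]
      ring
    · intro w _ _
      intro hc
      have := congrFun hc i0
      simp only [Function.update_self] at this
      rcases zmod2_cases (w i0) with h | h <;> rw [h] at this <;>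
        exact absurd this (by decide)
    · intro w _
      rw [Function.update_self, Function.update_idem]
      have : w i0 + 1 + 1 = w i0 := by
        rcases zmod2_cases (w i0) with h | h <;> rw [h] <;> decide
      rw [this, Function.update_eq_self]
    · intro w hw
      exact Finset.mem_univ (Function.update w i0 (w i0 + 1))

noncomputable def aCoef (u : ℝ) (i : ℕ) : ℝ := (2:ℝ) ^ (-((i:ℝ) + 2 - Real.logb 2 u))

lemma aCoef_pos (u : ℝ) (i : ℕ) : 0 < aCoef u i := Real.rpow_pos_of_pos (by norm_num) _

lemma rpow_neg_sum {α : Type*} (s : Finset α) (f : α → ℝ) :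
    (2:ℝ) ^ (-(∑ i ∈ s, f i)) = ∏ i ∈ s, (2:ℝ) ^ (-(f i)) := by
  classical
  induction s using Finset.cons_induction with
  | empty => simp
  | cons a s ha ih =>
    rw [Finset.sum_cons, Finset.prod_cons, neg_add, Real.rpow_add (by norm_num), ih]

lemma summable_aCoef (u : ℝ) : Summable (aCoef u) := by
  have h : ∀ i : ℕ, aCoef u i = (2:ℝ) ^ (Real.logb 2 u - 2) * (2⁻¹ : ℝ) ^ i := by
    intro i
    rw [aCoef, show -((i:ℝ) + 2 - Real.logb 2 u) = (Real.logb 2 u - 2) + (-(i:ℝ)) by ring,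
      Real.rpow_add (by norm_num), Real.rpow_neg (by norm_num), Real.rpow_natCast]
    rw [inv_pow]
  rw [show aCoef u = fun i => (2:ℝ) ^ (Real.logb 2 u - 2) * (2⁻¹:ℝ) ^ i from funext h]
  exact (summable_geometric_of_lt_one (by norm_num) (by norm_num)).mul_left _

lemma Gb_eq_walsh_mul (u x : ℝ) (k : ℕ) :
    Gb (fun i => (-1:ℝ) ^ (binDigit x (i+1)) * aCoef u i) k
      = walsh k x * (2:ℝ) ^ (-(muWeight u k)) := by
  rw [Gb, walsh, muWeight, rpow_neg_sum, ← Finset.prod_mul_distrib]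
  apply Finset.prod_congr rfl
  intro i _
  by_cases h : k.testBit i <;> simp [h, aCoef]

lemma abs_b_eq (u x : ℝ) (i : ℕ) :
    |(-1:ℝ) ^ (binDigit x (i+1)) * aCoef u i| = aCoef u i := by
  rw [abs_mul, abs_pow, abs_neg, abs_one, one_pow, one_mul,
    abs_of_pos (aCoef_pos u i)]

lemma summable_abs_b (u x : ℝ) :
    Summable (fun i => |(-1:ℝ) ^ (binDigit x (i+1)) * aCoef u i|) := by
  simpa [abs_b_eq u x] using summable_aCoef u

-- pi product HasSum
lemma hasSum_pi_prod : ∀ {s : ℕ} (g : Fin s → ℕ → ℝ),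
    (∀ j, Summable fun k => |g j k|) →
    HasSum (fun k : Fin s → ℕ => ∏ j, g j (k j)) (∏ j, ∑' k, g j k) := by
  intro s
  induction s with
  | zero =>
    intro g _
    have : (fun k : Fin 0 → ℕ => ∏ j, g j (k j)) = fun _ => 1 := by
      funext k; simp
    rw [this, show (∏ j : Fin 0, ∑' k, g j k) = 1 by simp]
    have hu : Unique (Fin 0 → ℕ) := Pi.uniqueOfIsEmpty _
    have := hasSum_single (f := fun _ : Fin 0 → ℕ => (1:ℝ)) hu.default
      (fun b' hb' => absurd (hu.uniq b') hb')
    simpa using this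
  | succ s ih =>
    intro g hg
    have h0 : HasSum (g 0) (∑' k, g 0 k) := ((hg 0).of_abs).hasSum
    have hIH : HasSum (fun k' : Fin s → ℕ => ∏ j, g j.succ (k' j))
        (∏ j : Fin s, ∑' k, g j.succ k) := ih _ (fun j => hg j.succ)
    have hIHabs : HasSum (fun k' : Fin s → ℕ => ∏ j, |g j.succ (k' j)|)
        (∏ j : Fin s, ∑' k, |g j.succ k|) := ih (fun j k => |g j.succ k|) (fun j =>
          (hg j.succ).congr (fun k => (abs_abs (g j.succ k)).symm))
    have hSabs : Summable (fun k' : Fin s → ℕ => ‖∏ j, g j.succ (k' j)‖) :=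
      hIHabs.summable.congr (fun k => by
        rw [Real.norm_eq_abs, Finset.abs_prod])
    have hn0 : Summable (fun k : ℕ => ‖g 0 k‖) :=
      (hg 0).congr (fun k => (Real.norm_eq_abs (g 0 k)).symm)
    have hnorm : Summable (fun p : ℕ × (Fin s → ℕ) =>
        ‖g 0 p.1 * ∏ j, g j.succ (p.2 j)‖) := by
      apply Summable.mul_norm hn0 hSabs
    have hsummable : Summable (fun p : ℕ × (Fin s → ℕ) =>
        g 0 p.1 * ∏ j, g j.succ (p.2 j)) := by
      apply Summable.of_abs
      exact hnorm.congr (fun p => Real.norm_eq_abs _)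
    have hprod := hsummable.hasSum
    have heq := HasSum.mul_eq h0 hIH hprod
    rw [← heq] at hprod
    rw [← Equiv.hasSum_iff (Fin.consEquiv (fun _ : Fin (s+1) => ℕ))]
    have hcomp : ((fun k : Fin (s+1) → ℕ => ∏ j, g j (k j)) ∘ (Fin.consEquiv (fun _ : Fin (s+1) => ℕ)))
        = fun p : ℕ × (Fin s → ℕ) => g 0 p.1 * ∏ j, g j.succ (p.2 j) := by
      funext p
      simp only [Function.comp_apply, Fin.consEquiv, Equiv.coe_fn_mk]
      rw [Fin.prod_univ_succ, Fin.cons_zero]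
      congr 1
    rw [hcomp, Fin.prod_univ_succ]
    exact hprod

-- ## glue lemmas

lemma tprod_coord (u x : ℝ) :
    ∏' i : ℕ, (1 + (-1:ℝ) ^ (binDigit x (i+1)) * (2:ℝ) ^ (-((i:ℝ) + 2 - Real.logb 2 u)))
      = ∑' k : ℕ, walsh k x * (2:ℝ) ^ (-muWeight u k) := by
  have h1 := tprod_one_add' (summable_abs_b u x)
  rw [show (fun i : ℕ => 1 + (-1:ℝ) ^ (binDigit x (i+1)) * (2:ℝ) ^ (-((i:ℝ) + 2 - Real.logb 2 u)))
      = fun i : ℕ => 1 + (-1:ℝ) ^ (binDigit x (i+1)) * aCoef u i from rfl]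
  rw [h1]
  exact tsum_congr (fun k => Gb_eq_walsh_mul u x k)

lemma abs_walsh_mu (u x : ℝ) (k : ℕ) :
    |walsh k x * (2:ℝ) ^ (-muWeight u k)| = Gb (aCoef u) k := by
  rw [← Gb_eq_walsh_mul u x k, Gb_abs]
  exact Finset.prod_congr rfl (fun i _ => by
    by_cases h : k.testBit i <;> simp [h, abs_b_eq u x])

lemma summable_Gb_aCoef (u : ℝ) : Summable (fun k => Gb (aCoef u) k) := by
  have h := summable_Gb_abs (b := aCoef u) (summable_aCoef u).abs
  exact h.congr (fun k => by
    apply Finset.prod_congr rfl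
    intro i _
    by_cases hb : k.testBit i <;> simp [hb, abs_of_pos (aCoef_pos u i)])

lemma summable_abs_walsh_mu (u x : ℝ) :
    Summable (fun k : ℕ => |walsh k x * (2:ℝ) ^ (-muWeight u k)|) :=
  (summable_Gb_aCoef u).congr (fun k => (abs_walsh_mu u x k).symm)

lemma rpow_neg_muWeightS {s : ℕ} (u : Fin s → ℝ) (k : Fin s → ℕ) :
    (2:ℝ) ^ (-muWeightS u k) = ∏ j, (2:ℝ) ^ (-muWeight (u j) (k j)) := by
  rw [muWeightS, rpow_neg_sum]

lemma prod_walsh_mu {s : ℕ} (u : Fin s → ℝ) (x : Fin s → ℝ) (k : Fin s → ℕ) :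
    (∏ j, walsh (k j) (x j) * (2:ℝ) ^ (-muWeight (u j) (k j)))
      = mwalsh k x * (2:ℝ) ^ (-muWeightS u k) := by
  rw [Finset.prod_mul_distrib, mwalsh, rpow_neg_muWeightS]

lemma rpow_mu_eq_Gb (u : ℝ) (k : ℕ) :
    (2:ℝ) ^ (-muWeight u k) = Gb (aCoef u) k := by
  rw [muWeight, rpow_neg_sum, Gb]
  exact Finset.prod_congr rfl (fun i _ => by
    by_cases h : k.testBit i <;> simp [h, aCoef])

lemma hasSum_mwalsh_mu {s : ℕ} (u : Fin s → ℝ) (x : Fin s → ℝ) :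
    HasSum (fun k : Fin s → ℕ => mwalsh k x * (2:ℝ) ^ (-muWeightS u k))
      (∏ j, ∑' k : ℕ, walsh k (x j) * (2:ℝ) ^ (-muWeight (u j) k)) := by
  have h := hasSum_pi_prod (fun j k => walsh k (x j) * (2:ℝ) ^ (-muWeight (u j) k))
    (fun j => summable_abs_walsh_mu (u j) (x j))
  have heq : (fun k : Fin s → ℕ => mwalsh k x * (2:ℝ) ^ (-muWeightS u k))
      = fun k : Fin s → ℕ => ∏ j, walsh (k j) (x j) * (2:ℝ) ^ (-muWeight (u j) (k j)) :=
    funext (fun k => (prod_walsh_mu u x k).symm)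
  rw [heq]
  exact h

lemma summable_mwalsh_mu {s : ℕ} (u : Fin s → ℝ) (x : Fin s → ℝ) :
    Summable (fun k : Fin s → ℕ => mwalsh k x * (2:ℝ) ^ (-muWeightS u k)) :=
  (hasSum_mwalsh_mu u x).summable

lemma summable_W {s : ℕ} (u : Fin s → ℝ) :
    Summable (fun k : Fin s → ℕ => (2:ℝ) ^ (-muWeightS u k)) := by
  have h := hasSum_pi_prod (fun j k => (2:ℝ) ^ (-muWeight (u j) k))
    (fun j => (summable_Gb_aCoef (u j)).congr (fun k => by
      rw [← rpow_mu_eq_Gb (u j) k, abs_of_nonneg (Real.rpow_nonneg (by norm_num) _)]))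
  apply h.summable.congr
  intro k
  rw [← rpow_neg_muWeightS]

lemma muWeightS_zero {s : ℕ} (u : Fin s → ℝ) : muWeightS u 0 = 0 := by
  rw [muWeightS]
  apply Finset.sum_eq_zero
  intro j _
  rw [muWeight]
  simp [Nat.size_zero]

lemma zero_mem_dual {s n m : ℕ} (D : DigitalNet s n m) : (0 : Fin s → ℕ) ∈ D.dual := by
  rw [DigitalNet.dual, Set.mem_setOf_eq]
  apply Finset.sum_eq_zero
  intro j _
  have : bitVec n ((0 : Fin s → ℕ) j) = 0 := by
    funext i
    simp [bitVec, Nat.zero_testBit]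
  rw [this, Matrix.mulVec_zero]

lemma neg_one_pow_binDigit_point {s n m : ℕ} (D : DigitalNet s n m) (h : ℕ) (j : Fin s)
    (i : ℕ) :
    (-1:ℝ) ^ (binDigit (D.point h j) (i + 1))
      = if hi : i < n then sgn ((D.C j).mulVec (bitVec m h) ⟨i, hi⟩) else 1 := by
  classical
  set M := (D.C j).mulVec (bitVec m h) with hM
  set y : ℕ → ℕ := fun i => if hi : i < n then (if M ⟨i, hi⟩ = 1 then 1 else 0) else 0 with hy
  have hyle : ∀ i, y i ≤ 1 := by
    intro i
    rw [hy]
    dsimp only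
    split_ifs <;> omega
  have hpt : D.point h j = ∑ i ∈ Finset.range n, (y i : ℝ) * (2:ℝ) ^ (-(i:ℤ) - 1) := by
    rw [DigitalNet.point, ← Fin.sum_univ_eq_sum_range (fun i => (y i : ℝ) * (2:ℝ) ^ (-(i:ℤ) - 1)) n]
    apply Finset.sum_congr rfl
    intro i _
    rw [← hM]
    have hyi : y (i : ℕ) = if M i = 1 then 1 else 0 := by
      rw [hy]
      dsimp only
      rw [dif_pos i.isLt]
    rw [hyi]
    by_cases hMi : M i = 1 <;> simp [hMi]
  rw [hpt, binDigit_finite y hyle n i]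
  by_cases hi : i < n
  · rw [if_pos hi, dif_pos hi, hy]
    dsimp only
    rw [dif_pos hi]
    by_cases hMi : M ⟨i, hi⟩ = 1 <;> simp [hMi, sgn]
  · rw [if_neg hi, dif_neg hi]
    norm_num

lemma walsh_point {s n m : ℕ} (D : DigitalNet s n m) (h : ℕ) (j : Fin s) (k : ℕ) :
    walsh k (D.point h j)
      = ∏ i : Fin n, sgn (bitVec n k i * (D.C j).mulVec (bitVec m h) i) := by
  classical
  set M := (D.C j).mulVec (bitVec m h) with hM
  set F : ℕ → ℝ := fun i => if k.testBit i
      then (if hi : i < n then sgn (M ⟨i, hi⟩) else 1) else 1 with hF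
  have hF1 : ∀ i, k.size ≤ i → F i = 1 := by
    intro i hi
    have : k.testBit i = false := by
      by_contra hc
      rw [Bool.not_eq_false] at hc
      exact absurd (lt_size_of_testBit hc) (by omega)
    rw [hF]
    simp [this]
  have hF2 : ∀ i, n ≤ i → F i = 1 := by
    intro i hi
    rw [hF]
    dsimp only
    rw [dif_neg (by omega)]
    simp
  have hL : walsh k (D.point h j) = ∏ i ∈ Finset.range k.size, F i := by
    rw [walsh]
    apply Finset.prod_congr rfl
    intro i _
    rw [hF]
    dsimp only
    by_cases hb : k.testBit i
    · rw [if_pos hb, if_pos hb, neg_one_pow_binDigit_point D h j i]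
    · rw [if_neg hb, if_neg hb]
  have hR : (∏ i : Fin n, sgn (bitVec n k i * M i)) = ∏ i ∈ Finset.range n, F i := by
    rw [← Fin.prod_univ_eq_prod_range (fun i => F i) n]
    apply Finset.prod_congr rfl
    intro i _
    rw [hF]
    dsimp only
    rw [bitVec]
    by_cases hb : k.testBit (i : ℕ)
    · rw [if_pos hb, if_pos hb, dif_pos i.isLt, one_mul]
    · rw [if_neg hb, if_neg hb, zero_mul, sgn_zero]
  set N := max k.size n with hN
  have hpadL : ∏ i ∈ Finset.range k.size, F i = ∏ i ∈ Finset.range N, F i := by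
    apply Finset.prod_subset (Finset.range_subset_range.mpr (le_max_left _ _))
    intro i _ hi
    simp only [Finset.mem_range, not_lt] at hi
    exact hF1 i hi
  have hpadR : ∏ i ∈ Finset.range n, F i = ∏ i ∈ Finset.range N, F i := by
    apply Finset.prod_subset (Finset.range_subset_range.mpr (le_max_right _ _))
    intro i _ hi
    simp only [Finset.mem_range, not_lt] at hi
    exact hF2 i hi
  rw [hL, hR, hpadL, hpadR]

lemma sum_mwalsh {s n m : ℕ} (D : DigitalNet s n m) (k : Fin s → ℕ) :
    ∑ h ∈ Finset.range (2 ^ m), mwalsh k (D.point h)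
      = if k ∈ D.dual then ((2:ℝ) ^ m) else 0 := by
  classical
  set V := ∑ j, (D.C j).transpose.mulVec (bitVec n (k j)) with hV
  have h1 : ∀ h : ℕ, mwalsh k (D.point h) = sgn (dotProduct V (bitVec m h)) := by
    intro h
    rw [mwalsh, Finset.prod_congr rfl (fun j _ => walsh_point D h j (k j))]
    have h2 : ∀ j : Fin s, (∏ i : Fin n, sgn (bitVec n (k j) i * (D.C j).mulVec (bitVec m h) i))
        = sgn (dotProduct (bitVec n (k j)) ((D.C j).mulVec (bitVec m h))) := by
      intro j
      rw [dotProduct, sgn_sum]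
    rw [Finset.prod_congr rfl (fun j _ => h2 j), ← sgn_sum]
    congr 1
    have h3 : ∀ j : Fin s, dotProduct (bitVec n (k j)) ((D.C j).mulVec (bitVec m h))
        = dotProduct ((D.C j).transpose.mulVec (bitVec n (k j))) (bitVec m h) := by
      intro j
      rw [Matrix.dotProduct_mulVec, Matrix.mulVec_transpose]
    have hswap : ∑ j, dotProduct ((D.C j).transpose.mulVec (bitVec n (k j)))
        (bitVec m h) = dotProduct V (bitVec m h) := by
      rw [hV]
      simp only [dotProduct, Finset.sum_apply, Finset.sum_mul]
      rw [Finset.sum_comm]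
    rw [Finset.sum_congr rfl (fun j _ => h3 j), hswap]
  rw [Finset.sum_congr rfl (fun h _ => h1 h), char_sum]
  have : k ∈ D.dual ↔ V = 0 := Iff.rfl
  by_cases hd : k ∈ D.dual
  · rw [if_pos hd, if_pos (this.mp hd)]
  · rw [if_neg hd, if_neg (fun hc => hd (this.mpr hc))]

end WafomAux

/-- Computable formula for the generalized WAFOM:
`W_u(P) = (1/N) Σ_{x ∈ P} ∏_{j=1}^s ∏_{i ≥ 1} (1 + (-1)^{ζ_{i,j}} 2^{-(i+1-log₂ u_j)}) - 1`,
where `ζ_{i,j}` are the binary digits of the coordinates of the points of `P`. -/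
theorem wafom_formula {s n m : ℕ} (hnm : m ≤ n) (D : DigitalNet s n m)
    (u : Fin s → ℝ) (hu : ∀ j, 0 < u j) :
    Wafom u D
      = (∑ h ∈ Finset.range (2 ^ m), ∏ j,
          ∏' i : ℕ,
            (1 + (-1 : ℝ) ^ (binDigit (D.point h j) (i + 1))
              * (2:ℝ) ^ (-((i : ℝ) + 2 - Real.logb 2 (u j))))) / (2 ^ m) - 1 := by
  classical
  have hNe : ((2:ℝ) ^ m) ≠ 0 := by positivity
  have per_h : ∀ h : ℕ,
      (∏ j, ∏' i : ℕ, (1 + (-1 : ℝ) ^ (binDigit (D.point h j) (i + 1))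
          * (2:ℝ) ^ (-((i : ℝ) + 2 - Real.logb 2 (u j)))))
        = ∑' k : Fin s → ℕ, mwalsh k (D.point h) * (2:ℝ) ^ (-muWeightS u k) := by
    intro h
    rw [Finset.prod_congr rfl (fun j _ => tprod_coord (u j) (D.point h j))]
    exact (hasSum_mwalsh_mu u (D.point h)).tsum_eq.symm
  have key : (∑ h ∈ Finset.range (2 ^ m), ∏ j,
      ∏' i : ℕ, (1 + (-1 : ℝ) ^ (binDigit (D.point h j) (i + 1))
        * (2:ℝ) ^ (-((i : ℝ) + 2 - Real.logb 2 (u j)))))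
      = (2:ℝ) ^ m * (Wafom u D + 1) := by
    rw [Finset.sum_congr rfl (fun h _ => per_h h)]
    rw [← Summable.tsum_finsetSum (fun h _ => summable_mwalsh_mu u (D.point h))]
    have hch : ∀ k : Fin s → ℕ,
        (∑ h ∈ Finset.range (2 ^ m), mwalsh k (D.point h) * (2:ℝ) ^ (-muWeightS u k))
          = (2:ℝ) ^ m * (if k ∈ D.dual then (2:ℝ) ^ (-muWeightS u k) else 0) := by
      intro k
      rw [← Finset.sum_mul, sum_mwalsh]
      by_cases hk : k ∈ D.dual
      · rw [if_pos hk, if_pos hk]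
      · rw [if_neg hk, if_neg hk, zero_mul, mul_zero]
    rw [tsum_congr hch, tsum_mul_left]
    congr 1
    have hsum1 : Summable (fun k : Fin s → ℕ =>
        if k ∈ D.dual ∧ k ≠ 0 then (2:ℝ) ^ (-muWeightS u k) else 0) := by
      apply Summable.of_nonneg_of_le _ _ (summable_W u)
      · intro k
        by_cases hk : k ∈ D.dual ∧ k ≠ 0 <;>
          simp [hk, Real.rpow_nonneg (show (0:ℝ) ≤ 2 by norm_num)]
      · intro k
        by_cases hk : k ∈ D.dual ∧ k ≠ 0
        · rw [if_pos hk]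
        · rw [if_neg hk]
          exact Real.rpow_nonneg (by norm_num) _
    have hsum2 : Summable (fun k : Fin s → ℕ => if k = 0 then (1:ℝ) else 0) :=
      summable_of_ne_finset_zero (s := {0}) (fun k hk => if_neg (by simpa using hk))
    have hsplit : ∀ k : Fin s → ℕ, (if k ∈ D.dual then (2:ℝ) ^ (-muWeightS u k) else 0)
        = (if k ∈ D.dual ∧ k ≠ 0 then (2:ℝ) ^ (-muWeightS u k) else 0)
          + (if k = 0 then 1 else 0) := by
      intro k
      by_cases hk0 : k = 0
      · subst hk0
        rw [if_pos (zero_mem_dual D), if_neg (by simp), if_pos rfl,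
          muWeightS_zero, neg_zero, Real.rpow_zero, zero_add]
      · rw [if_neg hk0, add_zero]
        by_cases hkd : k ∈ D.dual
        · rw [if_pos hkd, if_pos ⟨hkd, hk0⟩]
        · rw [if_neg hkd, if_neg (fun hc => hkd hc.1)]
    rw [tsum_congr hsplit, Summable.tsum_add hsum1 hsum2, Wafom]
    congr 1
    rw [tsum_eq_single (0 : Fin s → ℕ) (fun k hk => if_neg hk), if_pos rfl]
  rw [key, mul_div_cancel_left₀ _ hNe]
  ring
end
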